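/- Suppose every agent's centrality C_i satisfies Axiom 1 (increasing), and let (θ_i) be any thresholds. Then a network h is an APSN of the truncated game with thresholds (θ_i) if and only if h has 'Pareto optimal centralities', i.e.: for every non-adjacent pair i ≠ j, C_i(h) ≥ θ_i or C_j(h) ≥ θ_j; and for every edge ij ∈ E(h), C_i(h−ij) < θ_i and C_j(h−ij) < θ_j. -/
import Mathlib


open SimpleGraph

/-- Degree of vertex `i` in network `g`. -/
noncomputable def deg {V : Type*} (g : SimpleGraph V) (i : V) : ℕ :=
  Nat.card (g.neighborSet i)

/-- The network `g` with the (missing) edge `ij` added. -/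
def addE {V : Type*} (g : SimpleGraph V) (i j : V) : SimpleGraph V :=
  g ⊔ SimpleGraph.fromEdgeSet {s(i, j)}

/-- The network `g` with the edge `ij` removed. -/
def delE {V : Type*} (g : SimpleGraph V) (i j : V) : SimpleGraph V :=
  g.deleteEdges {s(i, j)}

/-- Utility of agent `i` in the game with centralities `C` and edge cost `c`. -/
noncomputable def util {V : Type*} (C : V → SimpleGraph V → ℝ) (c : ℝ) (i : V)
    (g : SimpleGraph V) : ℝ :=
  C i g - c * (deg g i)

/-- Adding the missing edge `ij` is an improving move. -/
def ImprovingAdd {V : Type*} (C : V → SimpleGraph V → ℝ) (c : ℝ) (g : SimpleGraph V)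
    (i j : V) : Prop :=
  util C c i (addE g i j) ≥ util C c i g ∧ util C c j (addE g i j) ≥ util C c j g ∧
    (util C c i (addE g i j) > util C c i g ∨ util C c j (addE g i j) > util C c j g)

/-- Deleting the edge `ij` is an improving move. -/
def ImprovingDel {V : Type*} (C : V → SimpleGraph V → ℝ) (c : ℝ) (g : SimpleGraph V)
    (i j : V) : Prop :=
  util C c i (delE g i j) > util C c i g ∨ util C c j (delE g i j) > util C c j g

/-- `g` is pairwise stable at edge cost `c`. -/
def PairwiseStable {V : Type*} (C : V → SimpleGraph V → ℝ) (c : ℝ) (g : SimpleGraph V) : Prop :=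
  (∀ i j : V, i ≠ j → ¬ g.Adj i j → ¬ ImprovingAdd C c g i j) ∧
  (∀ i j : V, g.Adj i j → ¬ ImprovingDel C c g i j)

/-- `g` is asymptotically pairwise stable. -/
def APSN {V : Type*} (C : V → SimpleGraph V → ℝ) (g : SimpleGraph V) : Prop :=
  ∃ ε₀ : ℝ, 0 < ε₀ ∧ ∀ c : ℝ, 0 < c → c < ε₀ → PairwiseStable C c g

/-- Axiom 1: the centrality of agent `i` is increasing. -/
def Axiom1 {V : Type*} (C : V → SimpleGraph V → ℝ) (i : V) : Prop :=
  ∀ (g : SimpleGraph V) (j : V), j ≠ i → ¬ g.Adj i j → C i (addE g i j) > C i g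

/-- Axiom 1′: the centrality of agent `i` is decreasing. -/
def Axiom1' {V : Type*} (C : V → SimpleGraph V → ℝ) (i : V) : Prop :=
  ∀ (g : SimpleGraph V) (j : V), j ≠ i → ¬ g.Adj i j → C i (addE g i j) < C i g

/-- Axiom 2: the centrality of agent `i` is componentwise. -/
def Axiom2 {V : Type*} (C : V → SimpleGraph V → ℝ) (i : V) : Prop :=
  ∀ (g : SimpleGraph V) (j : V), j ≠ i → ¬ g.Adj i j →
    ((g.Reachable i j → C i (addE g i j) > C i g) ∧
     (¬ g.Reachable i j → C i (addE g i j) ≤ C i g))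

/-- Axiom 2′: the centrality of agent `i` is peripheral. -/
def Axiom2' {V : Type*} (C : V → SimpleGraph V → ℝ) (i : V) : Prop :=
  ∀ (g : SimpleGraph V) (j : V), j ≠ i → ¬ g.Adj i j →
    ((g.Reachable i j → C i (addE g i j) ≤ C i g) ∧
     (¬ g.Reachable i j → C i (addE g i j) > C i g))

/-- The centrality of agent `i` is degree homophilic with (strictly increasing) `f`. -/
def DegreeHomophilic {V : Type*} (C : V → SimpleGraph V → ℝ) (i : V) (f : ℕ → ℤ) : Prop :=
  ∀ (g : SimpleGraph V) (j : V), j ≠ i → ¬ g.Adj i j →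
    (C i (addE g i j) > C i g ↔ (deg g j : ℤ) ≤ f (deg g i))

section Helpers
variable {V : Type*}

lemma addE_comm (g : SimpleGraph V) (i j : V) : addE g i j = addE g j i := by
  unfold addE; rw [Sym2.eq_swap]

lemma delE_comm (g : SimpleGraph V) (i j : V) : delE g i j = delE g j i := by
  unfold delE; rw [Sym2.eq_swap]

lemma nbr_addE (g : SimpleGraph V) {i j : V} (hne : i ≠ j) :
    (addE g i j).neighborSet i = insert j (g.neighborSet i) := by
  ext k
  simp only [addE, mem_neighborSet, sup_adj, fromEdgeSet_adj, Set.mem_singleton_iff,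
    Sym2.eq_iff, Set.mem_insert_iff]
  aesop

lemma deg_addE [Fintype V] (g : SimpleGraph V) {i j : V} (hne : i ≠ j) (hadj : ¬ g.Adj i j) :
    deg (addE g i j) i = deg g i + 1 := by
  unfold deg
  rw [nbr_addE g hne, Nat.card_coe_set_eq, Nat.card_coe_set_eq,
    Set.ncard_insert_of_notMem (by simpa using hadj) (Set.toFinite _)]

lemma nbr_delE (g : SimpleGraph V) (i j : V) :
    (delE g i j).neighborSet i = g.neighborSet i \ {j} := by
  ext k
  simp only [delE, mem_neighborSet, deleteEdges_adj, Set.mem_singleton_iff, Sym2.eq_iff,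
    Set.mem_diff]
  aesop

lemma deg_delE [Fintype V] (g : SimpleGraph V) {i j : V} (hadj : g.Adj i j) :
    deg (delE g i j) i + 1 = deg g i := by
  unfold deg
  rw [nbr_delE, Nat.card_coe_set_eq, Nat.card_coe_set_eq,
    Set.ncard_diff_singleton_add_one (by simpa using hadj) (Set.toFinite _)]

lemma addE_delE (g : SimpleGraph V) {i j : V} (hadj : g.Adj i j) :
    addE (delE g i j) i j = g := by
  ext a b
  simp only [addE, delE, sup_adj, deleteEdges_adj, Set.mem_singleton_iff, fromEdgeSet_adj]
  constructor
  · rintro (⟨hab, _⟩ | ⟨heq, hne⟩)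
    · exact hab
    · rw [Sym2.eq_iff] at heq
      rcases heq with ⟨rfl, rfl⟩ | ⟨rfl, rfl⟩
      · exact hadj
      · exact hadj.symm
  · intro hab
    by_cases heq : s(a, b) = s(i, j)
    · exact Or.inr ⟨heq, hab.ne⟩
    · exact Or.inl ⟨hab, heq⟩

lemma not_adj_delE (g : SimpleGraph V) (i j : V) : ¬ (delE g i j).Adj i j := by
  simp [delE]

end Helpers

theorem statement_14 {V : Type*} [Fintype V] (C : V → SimpleGraph V → ℝ)
    (hC : ∀ i, Axiom1 C i) (θ : V → ℝ) (h : SimpleGraph V) :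
    APSN (fun i g => min (C i g) (θ i)) h ↔
      ((∀ i j : V, i ≠ j → ¬ h.Adj i j → θ i ≤ C i h ∨ θ j ≤ C j h) ∧
       (∀ i j : V, h.Adj i j → C i (delE h i j) < θ i ∧ C j (delE h i j) < θ j)) := by
    classical
  constructor
  · rintro ⟨ε₀, hε₀, hstab⟩
    constructor
    · intro i j hne hnadj
      by_contra hcon
      push_neg at hcon
      obtain ⟨h1, h2⟩ := hcon
      have hCi : C i (addE h i j) > C i h := hC i h j hne.symm hnadj
      have hCj : C j (addE h i j) > C j h := by
        rw [addE_comm]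
        exact hC j h i hne (fun ha => hnadj ha.symm)
      set δi := min (C i (addE h i j)) (θ i) - C i h with hδi
      set δj := min (C j (addE h i j)) (θ j) - C j h with hδj
      have hδip : 0 < δi := sub_pos.mpr (lt_min hCi h1)
      have hδjp : 0 < δj := sub_pos.mpr (lt_min hCj h2)
      set c := min ε₀ (min δi δj) / 2 with hc
      have hminpos : 0 < min ε₀ (min δi δj) := lt_min hε₀ (lt_min hδip hδjp)
      have hc0 : 0 < c := by positivity
      have hcε : c < ε₀ := by
        have := min_le_left ε₀ (min δi δj); linarith
      have hcδi : c < δi := by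
        have h3 := min_le_right ε₀ (min δi δj)
        have h4 := min_le_left δi δj; linarith
      have hcδj : c < δj := by
        have h3 := min_le_right ε₀ (min δi δj)
        have h4 := min_le_right δi δj; linarith
      have hps := hstab c hc0 hcε
      apply hps.1 i j hne hnadj
      have hdi : deg (addE h i j) i = deg h i + 1 := deg_addE h hne hnadj
      have hdj : deg (addE h i j) j = deg h j + 1 := by
        rw [addE_comm]; exact deg_addE h hne.symm (fun ha => hnadj ha.symm)
      have hmi : min (C i h) (θ i) = C i h := min_eq_left h1.le
      have hmj : min (C j h) (θ j) = C j h := min_eq_left h2.le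
      have hui : util (fun i g => min (C i g) (θ i)) c i (addE h i j) >
          util (fun i g => min (C i g) (θ i)) c i h := by
        simp only [util, hdi, hmi]
        push_cast
        linarith
      have huj : util (fun i g => min (C i g) (θ i)) c j (addE h i j) >
          util (fun i g => min (C i g) (θ i)) c j h := by
        simp only [util, hdj, hmj]
        push_cast
        linarith
      exact ⟨hui.le, huj.le, Or.inl hui⟩
    · intro i j hadj
      have hps := hstab (ε₀ / 2) (by positivity) (by linarith)
      have hnd := hps.2 i j hadj
      have hd_i : (deg (delE h i j) i : ℝ) + 1 = deg h i := by
        exact_mod_cast deg_delE h hadj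
      have hd_j : (deg (delE h i j) j : ℝ) + 1 = deg h j := by
        rw [delE_comm]; exact_mod_cast deg_delE h hadj.symm
      constructor
      · by_contra hcon
        push_neg at hcon
        apply hnd
        left
        simp only [util]
        rw [min_eq_right hcon]
        have h5 : min (C i h) (θ i) ≤ θ i := min_le_right _ _
        nlinarith
      · by_contra hcon
        push_neg at hcon
        apply hnd
        right
        simp only [util]
        rw [min_eq_right hcon]
        have h5 : min (C j h) (θ j) ≤ θ j := min_le_right _ _
        nlinarith
  · rintro ⟨hA, hB⟩
    set f : V × V → ℝ := fun p =>
      if h.Adj p.1 p.2 then min (C p.1 h) (θ p.1) - C p.1 (delE h p.1 p.2) else 1 with hf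
    have hfpos : ∀ p, 0 < f p := by
      intro p
      by_cases hp : h.Adj p.1 p.2
      · have h1 := (hB p.1 p.2 hp).1
        have h2 : C p.1 (delE h p.1 p.2) < C p.1 h := by
          have := hC p.1 (delE h p.1 p.2) p.2 hp.ne' (not_adj_delE h p.1 p.2)
          rwa [addE_delE h hp] at this
        simp only [hf, if_pos hp]
        exact sub_pos.mpr (lt_min h2 h1)
      · simp [hf, hp]
    set S : Finset ℝ := insert 1 (Finset.univ.image f) with hS
    have hSne : S.Nonempty := ⟨1, by simp [hS]⟩
    have hpos : ∀ x ∈ S, 0 < x := by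
      intro x hx
      rw [hS, Finset.mem_insert] at hx
      rcases hx with rfl | hx
      · norm_num
      · obtain ⟨p, _, rfl⟩ := Finset.mem_image.mp hx
        exact hfpos p
    refine ⟨S.min' hSne, hpos _ (S.min'_mem hSne), ?_⟩
    intro c hc0 hcε
    have hcf : ∀ p : V × V, c < f p := by
      intro p
      exact lt_of_lt_of_le hcε (S.min'_le _ (by
        rw [hS]
        exact Finset.mem_insert_of_mem (Finset.mem_image_of_mem f (Finset.mem_univ _))))
    constructor
    · intro i j hne hnadj himp
      rcases hA i j hne hnadj with hθ | hθ
      · have h1 := himp.1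
        simp only [util, deg_addE h hne hnadj] at h1
        rw [min_eq_right hθ] at h1
        have h2 : min (C i (addE h i j)) (θ i) ≤ θ i := min_le_right _ _
        push_cast at h1
        nlinarith
      · have h1 := himp.2.1
        have hdj : deg (addE h i j) j = deg h j + 1 := by
          rw [addE_comm]; exact deg_addE h hne.symm (fun ha => hnadj ha.symm)
        simp only [util, hdj] at h1
        rw [min_eq_right hθ] at h1
        have h2 : min (C j (addE h i j)) (θ j) ≤ θ j := min_le_right _ _
        push_cast at h1
        nlinarith
    · intro i j hadj himp
      have hd_i : (deg (delE h i j) i : ℝ) + 1 = deg h i := by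
        exact_mod_cast deg_delE h hadj
      have hd_j : (deg (delE h i j) j : ℝ) + 1 = deg h j := by
        rw [delE_comm]; exact_mod_cast deg_delE h hadj.symm
      rcases himp with h1 | h1
      · have hfe := hcf (i, j)
        rw [hf] at hfe
        simp only [if_pos hadj] at hfe
        simp only [util] at h1
        rw [min_eq_left (hB i j hadj).1.le] at h1
        nlinarith
      · have hfe := hcf (j, i)
        rw [hf] at hfe
        simp only [if_pos hadj.symm] at hfe
        rw [delE_comm h j i] at hfe
        simp only [util] at h1
        rw [min_eq_left (hB i j hadj).2.le] at h1
        nlinarith
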